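/- arXiv:2212.10634 — 2 statements merged into one kernel-verified Lean document; each statement's English description precedes it below -/
import Mathlib

section
/- For a stabilizer state ρ on an L-qubit chain with stabilizer generators S in the clipped gauge, the von Neumann entropy of any contiguous region A equals |A| minus the number of generators g in S whose support interval [l(g), r(g)] is contained in A. -/
/-!
STATEMENT 0: For a stabilizer state ρ on an L-qubit chain, ρ = 2^{-L} Σ_{g∈G} g with G
the abelian group (not containing -I) generated by an independent set S of (signed)
Pauli-string generators in the clipped gauge, the von Neumann entropy of any contiguous
region A equals |A| minus the number of generators g ∈ S whose support interval
[l(g), r(g)] is contained in A.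

Generators are modelled as a sign (Bool) together with a Pauli content Fin L → Fin 4
(0 = I, 1 = X, 2 = Y, 3 = Z).  Since A is an interval, the support interval [l(g), r(g)]
is contained in A iff the support of g is contained in A.
-/

open scoped BigOperators Classical

namespace Stmt0

/-- The four single-qubit Pauli matrices I, X, Y, Z. -/
noncomputable def pauliMat : Fin 4 → Matrix (Fin 2) (Fin 2) ℂ :=
  ![1, !![0, 1; 1, 0], !![0, -Complex.I; Complex.I, 0], !![1, 0; 0, -1]]

/-- The Pauli string with content `f` on the qubit chain `Fin L`. -/
noncomputable def pauliString {L : ℕ} (f : Fin L → Fin 4) :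
    Matrix (Fin L → Fin 2) (Fin L → Fin 2) ℂ :=
  fun x y => ∏ i, pauliMat (f i) (x i) (y i)

/-- The matrix of a signed Pauli-string generator. -/
noncomputable def genMat {L : ℕ} (g : Bool × (Fin L → Fin 4)) :
    Matrix (Fin L → Fin 2) (Fin L → Fin 2) ℂ :=
  (if g.1 then (-1 : ℂ) else 1) • pauliString g.2

/-- The group element of the stabilizer group labelled by the subset `T` of generators:
the product Π_{j ∈ T} g_j (well defined since the generators commute). -/
noncomputable def groupElem {L m : ℕ} (gen : Fin m → Bool × (Fin L → Fin 4))
    (hcomm : ∀ j k, Commute (genMat (gen j)) (genMat (gen k))) (T : Finset (Fin m)) :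
    Matrix (Fin L → Fin 2) (Fin L → Fin 2) ℂ :=
  T.noncommProd (fun j => genMat (gen j)) (fun j _ k _ _ => hcomm j k)

/-- The stabilizer state ρ = 2^{-L} Σ_{g ∈ G} g. -/
noncomputable def stabState {L m : ℕ} (gen : Fin m → Bool × (Fin L → Fin 4))
    (hcomm : ∀ j k, Commute (genMat (gen j)) (genMat (gen k))) :
    Matrix (Fin L → Fin 2) (Fin L → Fin 2) ℂ :=
  ((2 : ℂ) ^ L)⁻¹ • ∑ T : Finset (Fin m), groupElem gen hcomm T

/-- `i` is the left endpoint l(g) of the Pauli content `f`. -/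
def isLeftEnd {L : ℕ} (f : Fin L → Fin 4) (i : Fin L) : Prop :=
  f i ≠ 0 ∧ ∀ k, f k ≠ 0 → i ≤ k

/-- `i` is the right endpoint r(g) of the Pauli content `f`. -/
def isRightEnd {L : ℕ} (f : Fin L → Fin 4) (i : Fin L) : Prop :=
  f i ≠ 0 ∧ ∀ k, f k ≠ 0 → k ≤ i

/-- The generating set (indexed by `Fin m`) is in the clipped gauge: at every site the
number of left endpoints plus the number of right endpoints is at most 2, and whenever
two generators share a left (or right) endpoint their Pauli operators there differ. -/
def ClippedGauge {L m : ℕ} (gen : Fin m → Bool × (Fin L → Fin 4)) : Prop :=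
  (∀ i : Fin L,
      (Finset.univ.filter fun j => isLeftEnd (gen j).2 i).card
        + (Finset.univ.filter fun j => isRightEnd (gen j).2 i).card ≤ 2) ∧
  (∀ i : Fin L, ∀ j k, j ≠ k → isLeftEnd (gen j).2 i → isLeftEnd (gen k).2 i →
      (gen j).2 i ≠ (gen k).2 i) ∧
  (∀ i : Fin L, ∀ j k, j ≠ k → isRightEnd (gen j).2 i → isRightEnd (gen k).2 i →
      (gen j).2 i ≠ (gen k).2 i)

/-- Merge an assignment on `A` with an assignment on its complement. -/
def mergeFun {ι : Type*} [DecidableEq ι] (A : Finset ι)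
    (a : {i // i ∈ A} → Fin 2) (c : {i // i ∉ A} → Fin 2) (i : ι) : Fin 2 :=
  if h : i ∈ A then a ⟨i, h⟩ else c ⟨i, h⟩

/-- Partial trace keeping only the qubits in region `A`. -/
noncomputable def ptrace {ι : Type*} [Fintype ι] [DecidableEq ι] (A : Finset ι)
    (ρ : Matrix (ι → Fin 2) (ι → Fin 2) ℂ) :
    Matrix ({i // i ∈ A} → Fin 2) ({i // i ∈ A} → Fin 2) ℂ :=
  fun a b => ∑ c : {i // i ∉ A} → Fin 2, ρ (mergeFun A a c) (mergeFun A b c)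

/-- Von Neumann entropy (in bits) of a Hermitian matrix, via its eigenvalues. -/
noncomputable def vnEntropy {n : Type*} [Fintype n] [DecidableEq n] (ρ : Matrix n n ℂ) : ℝ :=
  if h : ρ.IsHermitian then (∑ i, Real.negMulLog (h.eigenvalues i)) / Real.log 2 else 0

/-- Entanglement entropy of the region `A` in the state `ρ`. -/
noncomputable def entRegion {ι : Type*} [Fintype ι] [DecidableEq ι]
    (ρ : Matrix (ι → Fin 2) (ι → Fin 2) ℂ) (A : Finset ι) : ℝ :=
  vnEntropy (ptrace A ρ)

/-! ### Auxiliary machinery -/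

open scoped symmDiff

section PauliAlgebra

def enc : Fin 4 → ZMod 2 × ZMod 2 := ![(0,0),(1,0),(1,1),(0,1)]
def dec : ZMod 2 × ZMod 2 → Fin 4 := fun x =>
  if x = (0,0) then 0 else if x = (1,0) then 1 else if x = (1,1) then 2 else 3

/-- Klein-group addition of Pauli labels. -/
def padd : Fin 4 → Fin 4 → Fin 4 :=
  ![![0,1,2,3], ![1,0,3,2], ![2,3,0,1], ![3,2,1,0]]

noncomputable def mu : Fin 4 → Fin 4 → ℂ :=
  ![![1,1,1,1], ![1,1,Complex.I,-Complex.I], ![1,-Complex.I,1,Complex.I],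
    ![1,Complex.I,-Complex.I,1]]

lemma dec_enc : ∀ p : Fin 4, dec (enc p) = p := by decide
lemma enc_dec : ∀ x : ZMod 2 × ZMod 2, enc (dec x) = x := by decide
lemma dec_zero : dec 0 = 0 := by decide
lemma enc_eq_zero : ∀ p : Fin 4, (enc p = 0 ↔ p = 0) := by decide
lemma enc_padd : ∀ p q : Fin 4, enc (padd p q) = enc p + enc q := by decide
lemma padd_self : ∀ p : Fin 4, padd p p = 0 := by decide
lemma padd_comm : ∀ p q : Fin 4, padd p q = padd q p := by decide
lemma padd_zero_left : ∀ p : Fin 4, padd 0 p = p := by decide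
lemma padd_ne_zero : ∀ p q : Fin 4, p ≠ 0 → q ≠ 0 → p ≠ q → padd p q ≠ 0 := by decide

lemma padd_dec (a b : ZMod 2 × ZMod 2) : padd (dec a) (dec b) = dec (a + b) := by
  have h := enc_padd (dec a) (dec b)
  rw [enc_dec, enc_dec] at h
  rw [← h, dec_enc]

lemma char2_add_eq_zero (x y : ZMod 2 × ZMod 2) : x + y = 0 ↔ x = y := by
  revert x y; decide

lemma mu_self (p : Fin 4) : mu p p = 1 := by
  fin_cases p <;> simp [mu, Matrix.vecHead, Matrix.vecTail]
lemma mu_zero_left (q : Fin 4) : mu 0 q = 1 := by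
  fin_cases q <;> simp [mu, Matrix.vecHead, Matrix.vecTail]
lemma mu_zero_zero : mu 0 0 = 1 := mu_zero_left 0
lemma mu_mul_mu (p q : Fin 4) : mu p q * mu q p = 1 := by
  fin_cases p <;> fin_cases q <;>
    simp [mu, Matrix.vecHead, Matrix.vecTail] <;> ring_nf <;> simp [Complex.I_sq]

lemma pauli_mul (p q : Fin 4) :
    pauliMat p * pauliMat q = mu p q • pauliMat (padd p q) := by
  fin_cases p <;> fin_cases q <;>
    · ext i j
      fin_cases i <;> fin_cases j <;>
        simp [pauliMat, mu, padd, Matrix.vecHead, Matrix.vecTail, Matrix.mul_apply,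
          Fin.sum_univ_two, Matrix.one_apply] <;> ring

lemma pauli_herm (p : Fin 4) (i j : Fin 2) :
    (starRingEnd ℂ) (pauliMat p j i) = pauliMat p i j := by
  fin_cases p <;> fin_cases i <;> fin_cases j <;>
    simp [pauliMat, Matrix.one_apply]

lemma pauli_trace (p : Fin 4) :
    ∑ t : Fin 2, pauliMat p t t = if p = 0 then 2 else 0 := by
  fin_cases p <;> simp [pauliMat, Fin.sum_univ_two, Matrix.one_apply] <;> norm_num

lemma pauli_entry_ne (p : Fin 4) :
    pauliMat p 0 (if p = 1 ∨ p = 2 then 1 else 0) ≠ 0 := by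
  fin_cases p <;> simp [pauliMat, Matrix.one_apply] <;> norm_num [Complex.ext_iff]

end PauliAlgebra

section Pstr

variable {ι : Type*} [Fintype ι] [DecidableEq ι]

/-- General Pauli string over an arbitrary finite index type. -/
noncomputable def pstr (f : ι → Fin 4) : Matrix (ι → Fin 2) (ι → Fin 2) ℂ :=
  fun x y => ∏ i, pauliMat (f i) (x i) (y i)

lemma pstr_zero : (pstr (fun _ : ι => (0 : Fin 4))) = 1 := by
  ext x y
  by_cases h : x = y
  · subst h
    simp [pstr, pauliMat, Matrix.one_apply]
  · obtain ⟨i, hi⟩ := Function.ne_iff.mp h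
    rw [Matrix.one_apply_ne h]
    exact Finset.prod_eq_zero (Finset.mem_univ i)
      (by simp [pauliMat, Matrix.one_apply, hi])

lemma pstr_mul (f g : ι → Fin 4) :
    pstr f * pstr g = (∏ i, mu (f i) (g i)) • pstr (fun i => padd (f i) (g i)) := by
  ext x y
  rw [Matrix.mul_apply]
  have h1 : ∀ z : ι → Fin 2, pstr f x z * pstr g z y
      = ∏ i, (pauliMat (f i) (x i) (z i) * pauliMat (g i) (z i) (y i)) := by
    intro z; rw [pstr, pstr, ← Finset.prod_mul_distrib]
  simp_rw [h1]
  have h2 : ∑ z : ι → Fin 2, ∏ i, (pauliMat (f i) (x i) (z i) * pauliMat (g i) (z i) (y i))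
      = ∏ i, ∑ t : Fin 2, pauliMat (f i) (x i) t * pauliMat (g i) t (y i) := by
    rw [Finset.prod_univ_sum]
    apply Finset.sum_nbij' (fun z => fun i => z i) (fun z => fun i => z i) <;>
      simp [Fintype.mem_piFinset]
  rw [h2]
  have h3 : ∀ i, ∑ t : Fin 2, pauliMat (f i) (x i) t * pauliMat (g i) t (y i)
      = mu (f i) (g i) * pauliMat (padd (f i) (g i)) (x i) (y i) := by
    intro i
    have := congrFun (congrFun (pauli_mul (f i) (g i)) (x i)) (y i)
    rw [Matrix.mul_apply] at this
    simpa using this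
  simp_rw [h3]
  rw [Finset.prod_mul_distrib]
  simp [pstr, Matrix.smul_apply]

lemma pstr_ne_zero (f : ι → Fin 4) : pstr f ≠ 0 := by
  intro h
  have : pstr f (fun _ => 0) (fun i => if f i = 1 ∨ f i = 2 then 1 else 0) = 0 := by
    rw [h]; rfl
  rw [pstr] at this
  exact Finset.prod_ne_zero_iff.mpr (fun i _ => pauli_entry_ne (f i)) this

lemma pstr_herm (f : ι → Fin 4) : (pstr f).IsHermitian := by
  ext x y
  simp only [Matrix.conjTranspose_apply, pstr, star_prod]
  exact Finset.prod_congr rfl fun i _ => pauli_herm (f i) (x i) (y i)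

lemma pstr_trace (f : ι → Fin 4) :
    (pstr f).trace = ∏ i, (if f i = 0 then (2:ℂ) else 0) := by
  rw [Matrix.trace]
  have h2 : ∑ z : ι → Fin 2, ∏ i, pauliMat (f i) (z i) (z i)
      = ∏ i, ∑ t : Fin 2, pauliMat (f i) t t := by
    rw [Finset.prod_univ_sum]
    apply Finset.sum_nbij' (fun z => fun i => z i) (fun z => fun i => z i) <;>
      simp [Fintype.mem_piFinset]
  simpa [Matrix.diag, pstr, h2] using Finset.prod_congr rfl fun i _ => pauli_trace (f i)

lemma prod_mu_sq (f g : ι → Fin 4)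
    (hc : Commute (pstr f) (pstr g)) :
    (∏ i, mu (f i) (g i)) * (∏ i, mu (f i) (g i)) = 1 := by
  have h1 := pstr_mul f g
  have h2 := pstr_mul g f
  have hpc : (fun i => padd (g i) (f i)) = fun i => padd (f i) (g i) := by
    funext i; rw [padd_comm]
  rw [hpc] at h2
  have heq := hc.eq
  rw [h1, h2] at heq
  have hsc : (∏ i, mu (g i) (f i)) = ∏ i, mu (f i) (g i) :=
    (smul_left_injective ℂ (M := Matrix (ι → Fin 2) (ι → Fin 2) ℂ)
      (pstr_ne_zero (fun i => padd (f i) (g i))) heq).symm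
  calc (∏ i, mu (f i) (g i)) * (∏ i, mu (f i) (g i))
      = (∏ i, mu (f i) (g i)) * (∏ i, mu (g i) (f i)) := by rw [hsc]
    _ = ∏ i, (mu (f i) (g i) * mu (g i) (f i)) := (Finset.prod_mul_distrib).symm
    _ = 1 := by simp [mu_mul_mu]

end Pstr

section SumChar2

lemma sum_char2 {α : Type*} [DecidableEq α] (T T' : Finset α) (v : α → ZMod 2 × ZMod 2) :
    ∑ j ∈ T ∆ T', v j = ∑ j ∈ T, v j + ∑ j ∈ T', v j := by
  have h1 : T ∆ T' = (T ∪ T') \ (T ∩ T') := by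
    ext i; simp [Finset.mem_symmDiff]; tauto
  have h2 : ∑ j ∈ (T ∪ T') \ (T ∩ T'), v j + ∑ j ∈ T ∩ T', v j = ∑ j ∈ T ∪ T', v j :=
    Finset.sum_sdiff Finset.inter_subset_union
  have h3 : ∑ j ∈ T ∪ T', v j + ∑ j ∈ T ∩ T', v j = ∑ j ∈ T, v j + ∑ j ∈ T', v j :=
    Finset.sum_union_inter
  have hx : ∀ x : ZMod 2 × ZMod 2, x + x = 0 := by decide
  have e1 : ∑ j ∈ (T ∪ T') \ (T ∩ T'), v j
      = ∑ j ∈ T ∪ T', v j - ∑ j ∈ T ∩ T', v j := eq_sub_of_add_eq h2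
  have e2 : ∑ j ∈ T ∪ T', v j
      = ∑ j ∈ T, v j + ∑ j ∈ T', v j - ∑ j ∈ T ∩ T', v j := eq_sub_of_add_eq h3
  rw [h1, e1, e2, sub_sub, hx, sub_zero]

end SumChar2

section GroupElemStructure

variable {L m : ℕ} (gen : Fin m → Bool × (Fin L → Fin 4))
  (hcomm : ∀ j k, Commute (genMat (gen j)) (genMat (gen k)))

/-- The Pauli content of the product of the generators indexed by `T`. -/
noncomputable def fT (T : Finset (Fin m)) : Fin L → Fin 4 :=
  fun i => dec (∑ j ∈ T, enc ((gen j).2 i))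

lemma fT_empty : fT gen ∅ = fun _ => 0 := by
  funext i; simp [fT, dec_zero]

lemma fT_insert {j : Fin m} {T : Finset (Fin m)} (h : j ∉ T) :
    fT gen (insert j T) = fun i => padd ((gen j).2 i) (fT gen T i) := by
  funext i
  rw [fT, Finset.sum_insert h, ← padd_dec, dec_enc]
  rfl

lemma fT_symmDiff (T T' : Finset (Fin m)) :
    fT gen (T ∆ T') = fun i => padd (fT gen T i) (fT gen T' i) := by
  funext i
  rw [fT, sum_char2, ← padd_dec]
  rfl

lemma genMat_smul (g : Bool × (Fin L → Fin 4)) :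
    genMat g = (if g.1 then (-1 : ℂ) else 1) • pstr g.2 := rfl

lemma genMat_sq (g : Bool × (Fin L → Fin 4)) : genMat g * genMat g = 1 := by
  rw [genMat_smul, smul_mul_smul_comm, pstr_mul]
  have h1 : (fun i => padd (g.2 i) (g.2 i)) = fun _ : Fin L => (0 : Fin 4) := by
    funext i; rw [padd_self]
  rw [h1, pstr_zero]
  have h2 : (∏ i : Fin L, mu (g.2 i) (g.2 i)) = 1 := by
    simp [mu_self]
  rw [h2]
  by_cases hb : g.1 <;> simp [hb]

lemma groupElem_empty : groupElem gen hcomm ∅ = 1 :=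
  Finset.noncommProd_empty _ _

lemma groupElem_insert {j : Fin m} {T : Finset (Fin m)} (h : j ∉ T) :
    groupElem gen hcomm (insert j T) = genMat (gen j) * groupElem gen hcomm T :=
  Finset.noncommProd_insert_of_notMem _ _ _ _ h

lemma commute_genMat_groupElem (j : Fin m) (T : Finset (Fin m)) :
    Commute (genMat (gen j)) (groupElem gen hcomm T) :=
  Finset.noncommProd_commute _ _ _ _ (fun k _ => hcomm j k)

lemma groupElem_erase {j : Fin m} {T : Finset (Fin m)} (h : j ∈ T) :
    groupElem gen hcomm T = genMat (gen j) * groupElem gen hcomm (T.erase j) := by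
  conv_lhs => rw [← Finset.insert_erase h]
  exact groupElem_insert gen hcomm (Finset.notMem_erase j T)

lemma groupElem_struct (T : Finset (Fin m)) :
    ∃ c : ℂ, c * c = 1 ∧ groupElem gen hcomm T = c • pstr (fT gen T) := by
  induction T using Finset.induction_on with
  | empty =>
    refine ⟨1, by norm_num, ?_⟩
    rw [groupElem_empty, fT_empty, pstr_zero, one_smul]
  | insert j T hj ih =>
    obtain ⟨c, hc, hEq⟩ := ih
    have hcne : c ≠ 0 := fun h => by simp [h] at hc
    set s : ℂ := (if (gen j).1 then (-1 : ℂ) else 1) with hs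
    have hsne : s ≠ 0 := by by_cases hb : (gen j).1 <;> simp [hs, hb]
    have hss : s * s = 1 := by by_cases hb : (gen j).1 <;> simp [hs, hb]
    -- commuting Pauli strings
    have hcg := commute_genMat_groupElem gen hcomm j T
    rw [genMat_smul, hEq] at hcg
    have hpcomm : Commute (pstr ((gen j).2)) (pstr (fT gen T)) := by
      have h1 : (s * c) • (pstr ((gen j).2) * pstr (fT gen T))
          = (s * c) • (pstr (fT gen T) * pstr ((gen j).2)) := by
        have := hcg.eq
        rw [smul_mul_smul_comm, smul_mul_smul_comm] at this
        rw [this, mul_comm c s]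
      exact smul_right_injective _ (mul_ne_zero hsne hcne) h1
    set w : ℂ := ∏ i, mu ((gen j).2 i) (fT gen T i) with hw
    have hww : w * w = 1 := prod_mu_sq _ _ hpcomm
    refine ⟨s * c * w, ?_, ?_⟩
    · calc (s * c * w) * (s * c * w) = (s * s) * (c * c) * (w * w) := by ring
        _ = 1 := by rw [hss, hc, hww]; norm_num
    · rw [groupElem_insert gen hcomm hj, hEq, genMat_smul, smul_mul_smul_comm,
        pstr_mul, fT_insert gen hj, smul_smul]

lemma groupElem_symmDiff (T T' : Finset (Fin m)) :
    groupElem gen hcomm T * groupElem gen hcomm T' = groupElem gen hcomm (T ∆ T') := by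
  induction T' using Finset.induction_on with
  | empty =>
    rw [groupElem_empty, mul_one]
    have : T ∆ (∅ : Finset (Fin m)) = T := by simpa using symmDiff_bot T
    rw [this]
  | insert j T' hj ih =>
    rw [groupElem_insert gen hcomm hj, ← mul_assoc,
      ((commute_genMat_groupElem gen hcomm j T).symm).eq, mul_assoc, ih]
    by_cases hjS : j ∈ T ∆ T'
    · have hjS' := Finset.mem_symmDiff.mp hjS
      have hset : T ∆ insert j T' = (T ∆ T').erase j := by
        ext i
        simp only [Finset.mem_symmDiff, Finset.mem_insert, Finset.mem_erase]
        by_cases hij : i = j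
        · subst hij; simp only [eq_self_iff_true, true_or, not_true, true_iff,
            false_iff, not_and, not_or, not_not, ne_eq]
          try tauto
        · simp only [hij, false_or, ne_eq, not_false_iff, true_and]
          try tauto
      rw [hset, groupElem_erase gen hcomm hjS, ← mul_assoc, genMat_sq, one_mul]
    · have hjS' := fun h => hjS (Finset.mem_symmDiff.mpr h)
      have hset : T ∆ insert j T' = insert j (T ∆ T') := by
        ext i
        simp only [Finset.mem_symmDiff, Finset.mem_insert]
        by_cases hij : i = j
        · subst hij; simp only [eq_self_iff_true, true_or, not_true]
          try tauto
        · simp only [hij, false_or]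
          try tauto
      rw [hset, groupElem_insert gen hcomm hjS]

end GroupElemStructure

section Ptrace

variable {ι : Type*} [Fintype ι] [DecidableEq ι]

/-- The merge equivalence between split assignments and full assignments. -/
def mergeEquiv (A : Finset ι) :
    (({i // i ∈ A} → Fin 2) × ({i // i ∉ A} → Fin 2)) ≃ (ι → Fin 2) where
  toFun p := mergeFun A p.1 p.2
  invFun x := (fun i => x i, fun i => x i)
  left_inv p := by
    ext i
    · simp [mergeFun]
    · simp [mergeFun, i.2]
  right_inv x := by
    funext i
    by_cases h : i ∈ A <;> simp [mergeFun, h]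

lemma ptrace_smul (A : Finset ι) (c : ℂ) (M : Matrix (ι → Fin 2) (ι → Fin 2) ℂ) :
    ptrace A (c • M) = c • ptrace A M := by
  funext a b
  simp [ptrace, Finset.mul_sum]

lemma ptrace_sum (A : Finset ι) {κ : Type*} (s : Finset κ)
    (M : κ → Matrix (ι → Fin 2) (ι → Fin 2) ℂ) :
    ptrace A (∑ T ∈ s, M T) = ∑ T ∈ s, ptrace A (M T) := by
  funext a b
  simp only [ptrace, Matrix.sum_apply]
  rw [Finset.sum_comm]

lemma trace_ptrace (A : Finset ι) (M : Matrix (ι → Fin 2) (ι → Fin 2) ℂ) :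
    (ptrace A M).trace = M.trace := by
  rw [Matrix.trace, Matrix.trace]
  simp only [Matrix.diag, ptrace]
  exact (Fintype.sum_prod_type
      (f := fun p : (({i // i ∈ A} → Fin 2) × ({i // i ∉ A} → Fin 2)) =>
        M (mergeFun A p.1 p.2) (mergeFun A p.1 p.2))).symm.trans
    (Fintype.sum_equiv (mergeEquiv A) _ _ fun p => rfl)

lemma ptrace_herm (A : Finset ι) {M : Matrix (ι → Fin 2) (ι → Fin 2) ℂ}
    (hM : M.IsHermitian) : (ptrace A M).IsHermitian := by
  ext a b
  simp only [Matrix.conjTranspose_apply, ptrace, star_sum]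
  refine Finset.sum_congr rfl fun c _ => ?_
  have := congrFun (congrFun hM (mergeFun A a c)) (mergeFun A b c)
  simpa [Matrix.conjTranspose_apply] using this

lemma ptrace_pstr (A : Finset ι) (f : ι → Fin 4) :
    ptrace A (pstr f)
      = (∏ i : {i // i ∉ A}, (if f i = 0 then (2:ℂ) else 0)) •
          pstr (fun i : {i // i ∈ A} => f i) := by
  funext a b
  simp only [ptrace, pstr, Matrix.smul_apply, smul_eq_mul]
  have hsplit : ∀ c : {i // i ∉ A} → Fin 2,
      (∏ i : ι, pauliMat (f i) (mergeFun A a c i) (mergeFun A b c i))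
        = (∏ i : {i // i ∈ A}, pauliMat (f i) (a i) (b i))
          * ∏ i : {i // i ∉ A}, pauliMat (f i) (c i) (c i) := by
    intro c
    rw [← Fintype.prod_subtype_mul_prod_subtype (fun i => i ∈ A)
      (fun i => pauliMat (f i) (mergeFun A a c i) (mergeFun A b c i))]
    congr 1
    · refine Finset.prod_congr (by ext; simp) fun i _ => ?_
      have h1 : mergeFun A a c i = a i := by simp [mergeFun, i.2]
      have h2 : mergeFun A b c i = b i := by simp [mergeFun, i.2]
      rw [h1, h2]
    · refine Finset.prod_congr (by ext; simp) fun i _ => ?_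
      have h1 : mergeFun A a c i = c i := by simp [mergeFun, i.2]
      have h2 : mergeFun A b c i = c i := by simp [mergeFun, i.2]
      rw [h1, h2]
  simp_rw [hsplit]
  rw [← Finset.mul_sum]
  have hsum : ∑ c : {i // i ∉ A} → Fin 2, ∏ i : {i // i ∉ A}, pauliMat (f i) (c i) (c i)
      = ∏ i : {i // i ∉ A}, ∑ t : Fin 2, pauliMat (f i) t t := by
    rw [Finset.prod_univ_sum]
    apply Finset.sum_nbij' (fun z => fun i => z i) (fun z => fun i => z i) <;>
      simp [Fintype.mem_piFinset]
  rw [hsum]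
  simp_rw [pauli_trace]
  ring

end Ptrace

section Support

variable {L m : ℕ} (gen : Fin m → Bool × (Fin L → Fin 4))
  (hcomm : ∀ j k, Commute (genMat (gen j)) (genMat (gen k)))

lemma gen_supp_nonempty (hindep : Function.Injective (groupElem gen hcomm))
    (hneg : ∀ T, groupElem gen hcomm T ≠ -1) (j : Fin m) :
    ∃ i, (gen j).2 i ≠ 0 := by
  by_contra h
  push_neg at h
  have hz : (gen j).2 = fun _ => (0 : Fin 4) := funext h
  have hG : groupElem gen hcomm {j} = genMat (gen j) := by
    rw [show ({j} : Finset (Fin m)) = insert j ∅ from rfl,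
      groupElem_insert gen hcomm (Finset.notMem_empty j), groupElem_empty, mul_one]
  rw [genMat_smul, hz, pstr_zero] at hG
  by_cases hb : (gen j).1
  · rw [hb, if_pos rfl, neg_smul, one_smul] at hG
    exact hneg {j} hG
  · rw [if_neg hb, one_smul] at hG
    have h1 : groupElem gen hcomm {j} = groupElem gen hcomm ∅ := by
      rw [hG, groupElem_empty]
    have := hindep h1
    simp at this

lemma fT_eq_zero_iff (T : Finset (Fin m)) (i : Fin L) :
    fT gen T i = 0 ↔ ∑ j ∈ T, enc ((gen j).2 i) = 0 := by
  constructor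
  · intro h
    have := congrArg enc h
    rw [fT, enc_dec] at this
    exact this.trans (by decide)
  · intro h
    rw [fT, h, dec_zero]

lemma supp_fT_subset (hindep : Function.Injective (groupElem gen hcomm))
    (hneg : ∀ T, groupElem gen hcomm T ≠ -1) (hclip : ClippedGauge gen) (lo hi : Fin L)
    (T : Finset (Fin m)) (h0 : ∀ i, i ∉ Finset.Icc lo hi → fT gen T i = 0) :
    ∀ j ∈ T, ∀ i, (gen j).2 i ≠ 0 → i ∈ Finset.Icc lo hi := by
  by_contra hcon
  push_neg at hcon
  obtain ⟨j0, hj0T, i0, hi0ne, hi0A⟩ := hcon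
  classical
  set U : Finset (Fin L) := Finset.univ.filter (fun i => ∃ j ∈ T, (gen j).2 i ≠ 0) with hUdef
  have hi0U : i0 ∈ U := by
    simp only [hUdef, Finset.mem_filter, Finset.mem_univ, true_and]
    exact ⟨j0, hj0T, hi0ne⟩
  have hUne : U.Nonempty := ⟨i0, hi0U⟩
  -- a helper to derive a contradiction at a site istar outside A where the sum is provably nonzero
  have key : ∀ istar : Fin L, istar ∉ Finset.Icc lo hi →
      (∀ j ∈ T, ∀ k, (gen j).2 k ≠ 0 → ((gen j).2 istar ≠ 0 → True)) → True := fun _ _ _ => trivial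
  have main : ∀ istar : Fin L, istar ∉ Finset.Icc lo hi →
      (T.filter (fun j => (gen j).2 istar ≠ 0)).Nonempty →
      (T.filter (fun j => (gen j).2 istar ≠ 0)).card ≤ 2 →
      (∀ j k, j ∈ T.filter (fun j => (gen j).2 istar ≠ 0) →
        k ∈ T.filter (fun j => (gen j).2 istar ≠ 0) → j ≠ k →
        (gen j).2 istar ≠ (gen k).2 istar) → False := by
    intro istar hnotA hWne hWcard hWdist
    set W := T.filter (fun j => (gen j).2 istar ≠ 0) with hWdef
    have hsum : ∑ j ∈ T, enc ((gen j).2 istar) = ∑ j ∈ W, enc ((gen j).2 istar) := by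
      rw [hWdef]
      refine (Finset.sum_filter_of_ne ?_).symm
      intro x _ hx
      intro hzero
      rw [hzero] at hx
      exact hx (by simp [enc])
    have hzero := (fT_eq_zero_iff gen T istar).mp (h0 istar hnotA)
    rw [hsum] at hzero
    rcases Nat.lt_or_ge W.card 2 with hlt | hge
    · have h1 : W.card = 1 := le_antisymm (by omega) (Finset.card_pos.mpr hWne)
      obtain ⟨a, ha⟩ := Finset.card_eq_one.mp h1
      rw [ha, Finset.sum_singleton] at hzero
      have haW : a ∈ W := by rw [ha]; exact Finset.mem_singleton_self a
      have : (gen a).2 istar ≠ 0 := (Finset.mem_filter.mp haW).2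
      exact this ((enc_eq_zero _).mp hzero)
    · have h2 : W.card = 2 := le_antisymm hWcard hge
      obtain ⟨a, b, hab, hW2⟩ := Finset.card_eq_two.mp h2
      have haW : a ∈ W := by rw [hW2]; simp
      have hbW : b ∈ W := by rw [hW2]; simp
      rw [hW2, Finset.sum_pair hab] at hzero
      have hne := hWdist a b haW hbW hab
      have := (char2_add_eq_zero _ _).mp hzero
      apply hne
      have := congrArg dec this
      rwa [dec_enc, dec_enc] at this
  -- now the two cases
  have hsplit : i0 < lo ∨ hi < i0 := by
    rw [Finset.mem_Icc] at hi0A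
    rcases not_and_or.mp hi0A with h1 | h2
    · exact Or.inl (lt_of_not_ge h1)
    · exact Or.inr (lt_of_not_ge h2)
  rcases hsplit with hcase | hcase
  · -- leftmost site
    set istar := U.min' hUne with histar
    have histarU : istar ∈ U := U.min'_mem hUne
    have histar_lt : istar < lo := lt_of_le_of_lt (U.min'_le i0 hi0U) hcase
    have hnotA : istar ∉ Finset.Icc lo hi := by
      rw [Finset.mem_Icc]
      exact fun hh => absurd hh.1 (not_le.mpr histar_lt)
    have hleft : ∀ j ∈ T.filter (fun j => (gen j).2 istar ≠ 0), isLeftEnd (gen j).2 istar := by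
      intro j hj
      obtain ⟨hjT, hjne⟩ := Finset.mem_filter.mp hj
      refine ⟨hjne, fun k hk => ?_⟩
      apply U.min'_le
      simp only [hUdef, Finset.mem_filter, Finset.mem_univ, true_and]
      exact ⟨j, hjT, hk⟩
    have hWne : (T.filter (fun j => (gen j).2 istar ≠ 0)).Nonempty := by
      simp only [hUdef, Finset.mem_filter, Finset.mem_univ, true_and] at histarU
      obtain ⟨j, hjT, hjne⟩ := histarU
      exact ⟨j, Finset.mem_filter.mpr ⟨hjT, hjne⟩⟩
    have hsub : (T.filter (fun j => (gen j).2 istar ≠ 0))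
        ⊆ Finset.univ.filter (fun j => isLeftEnd (gen j).2 istar) := by
      intro j hj
      exact Finset.mem_filter.mpr ⟨Finset.mem_univ j, hleft j hj⟩
    have hcard : (T.filter (fun j => (gen j).2 istar ≠ 0)).card ≤ 2 :=
      le_trans (Finset.card_le_card hsub)
        (le_trans (Nat.le_add_right _ _) (hclip.1 istar))
    exact main istar hnotA hWne hcard
      (fun j k hj hk hjk => hclip.2.1 istar j k hjk (hleft j hj) (hleft k hk))
  · -- rightmost site
    set istar := U.max' hUne with histar
    have histarU : istar ∈ U := U.max'_mem hUne
    have histar_gt : hi < istar := lt_of_lt_of_le hcase (U.le_max' i0 hi0U)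
    have hnotA : istar ∉ Finset.Icc lo hi := by
      rw [Finset.mem_Icc]
      exact fun hh => absurd hh.2 (not_le.mpr histar_gt)
    have hright : ∀ j ∈ T.filter (fun j => (gen j).2 istar ≠ 0), isRightEnd (gen j).2 istar := by
      intro j hj
      obtain ⟨hjT, hjne⟩ := Finset.mem_filter.mp hj
      refine ⟨hjne, fun k hk => ?_⟩
      apply U.le_max'
      simp only [hUdef, Finset.mem_filter, Finset.mem_univ, true_and]
      exact ⟨j, hjT, hk⟩
    have hWne : (T.filter (fun j => (gen j).2 istar ≠ 0)).Nonempty := by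
      simp only [hUdef, Finset.mem_filter, Finset.mem_univ, true_and] at histarU
      obtain ⟨j, hjT, hjne⟩ := histarU
      exact ⟨j, Finset.mem_filter.mpr ⟨hjT, hjne⟩⟩
    have hsub : (T.filter (fun j => (gen j).2 istar ≠ 0))
        ⊆ Finset.univ.filter (fun j => isRightEnd (gen j).2 istar) := by
      intro j hj
      exact Finset.mem_filter.mpr ⟨Finset.mem_univ j, hright j hj⟩
    have hcard : (T.filter (fun j => (gen j).2 istar ≠ 0)).card ≤ 2 :=
      le_trans (Finset.card_le_card hsub)
        (le_trans (Nat.le_add_left _ _) (hclip.1 istar))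
    exact main istar hnotA hWne hcard
      (fun j k hj hk hjk => hclip.2.2 istar j k hjk (hright j hj) (hright k hk))

lemma fT_supported_iff (hindep : Function.Injective (groupElem gen hcomm))
    (hneg : ∀ T, groupElem gen hcomm T ≠ -1) (hclip : ClippedGauge gen) (lo hi : Fin L)
    (T : Finset (Fin m)) :
    (∀ i, i ∉ Finset.Icc lo hi → fT gen T i = 0) ↔
      (∀ j ∈ T, (Finset.univ.filter fun i => (gen j).2 i ≠ 0) ⊆ Finset.Icc lo hi) := by
  constructor
  · intro h0 j hj
    intro i hmem
    rw [Finset.mem_filter] at hmem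
    exact supp_fT_subset gen hcomm hindep hneg hclip lo hi T h0 j hj i hmem.2
  · intro hK i hiA
    rw [fT_eq_zero_iff]
    apply Finset.sum_eq_zero
    intro j hj
    have : (gen j).2 i = 0 := by
      by_contra hne
      exact hiA (hK j hj (Finset.mem_filter.mpr ⟨Finset.mem_univ i, hne⟩))
    rw [this]
    simp [enc]

lemma trace_groupElem (hindep : Function.Injective (groupElem gen hcomm))
    (hneg : ∀ T, groupElem gen hcomm T ≠ -1) (T : Finset (Fin m)) :
    (groupElem gen hcomm T).trace = if T = ∅ then (2:ℂ)^L else 0 := by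
  by_cases hT : T = ∅
  · subst hT
    rw [groupElem_empty, if_pos rfl, Matrix.trace_one]
    simp [Fintype.card_fun]
  · rw [if_neg hT]
    obtain ⟨c, hc, hEq⟩ := groupElem_struct gen hcomm T
    by_cases hf : fT gen T = fun _ => 0
    · exfalso
      rw [hf, pstr_zero] at hEq
      rcases mul_self_eq_one_iff.mp hc with h1 | h1
      · rw [h1, one_smul] at hEq
        exact hT (hindep (hEq.trans (groupElem_empty gen hcomm).symm))
      · rw [h1, neg_smul, one_smul] at hEq
        exact hneg T hEq
    · rw [hEq, Matrix.trace_smul, pstr_trace]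
      obtain ⟨i, hi⟩ := Function.ne_iff.mp hf
      rw [Finset.prod_eq_zero (Finset.mem_univ i) (by simp [hi]), smul_zero]

lemma trace_stabState (hindep : Function.Injective (groupElem gen hcomm))
    (hneg : ∀ T, groupElem gen hcomm T ≠ -1) :
    (stabState gen hcomm).trace = 1 := by
  rw [stabState, Matrix.trace_smul, Matrix.trace_sum]
  have : ∀ T : Finset (Fin m), (groupElem gen hcomm T).trace
      = if T = ∅ then (2:ℂ)^L else 0 := trace_groupElem gen hcomm hindep hneg
  rw [Finset.sum_congr rfl (fun T _ => this T), Finset.sum_ite_eq' Finset.univ ∅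
    (fun _ => (2:ℂ)^L)]
  simp

end Support

section Spectral

lemma trace_eq_sum_eig {n : Type*} [Fintype n] [DecidableEq n] {B : Matrix n n ℂ}
    (hB : B.IsHermitian) : B.trace = ∑ i, (hB.eigenvalues i : ℂ) := by
  exact hB.trace_eq_sum_eigenvalues

lemma eig_dichotomy {n : Type*} [Fintype n] [DecidableEq n] {B : Matrix n n ℂ}
    (hB : B.IsHermitian) (lam : ℝ) (hsq : B * B = ((lam : ℝ) : ℂ) • B) (x : n) :
    hB.eigenvalues x = 0 ∨ hB.eigenvalues x = lam := by
  have hmv0 := hB.mulVec_eigenvectorBasis x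
  set v : n → ℂ := (WithLp.equiv 2 (n → ℂ)) (hB.eigenvectorBasis x) with hv
  have hvne : v ≠ 0 := by
    intro h
    have h0 : hB.eigenvectorBasis x = 0 := by
      apply (WithLp.equiv 2 (n → ℂ)).injective
      simpa [hv] using h
    exact hB.eigenvectorBasis.toBasis.ne_zero x (by simpa using h0)
  have hmv : B.mulVec v = ((hB.eigenvalues x : ℝ) : ℂ) • v := by
    rw [show v = (hB.eigenvectorBasis x).ofLp from rfl, hmv0]
    funext i
    simp [Pi.smul_apply, Complex.real_smul]
  have h2 : (B * B).mulVec v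
      = (((hB.eigenvalues x : ℝ) : ℂ) * ((hB.eigenvalues x : ℝ) : ℂ)) • v := by
    rw [← Matrix.mulVec_mulVec, hmv, Matrix.mulVec_smul, hmv, smul_smul]
  rw [hsq, Matrix.smul_mulVec, hmv, smul_smul] at h2
  have h3 : ((((hB.eigenvalues x : ℝ) : ℂ)) * (((hB.eigenvalues x : ℝ) : ℂ))
      - (((lam : ℝ) : ℂ)) * (((hB.eigenvalues x : ℝ) : ℂ))) • v = 0 := by
    rw [sub_smul, h2, sub_self]
  rcases smul_eq_zero.mp h3 with h4 | h4
  · have h5 : hB.eigenvalues x * hB.eigenvalues x - lam * hB.eigenvalues x = 0 := by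
      exact_mod_cast h4
    have h6 : hB.eigenvalues x * (hB.eigenvalues x - lam) = 0 := by
      linear_combination h5
    rcases mul_eq_zero.mp h6 with h7 | h7
    · exact Or.inl h7
    · exact Or.inr (by linarith)
  · exact absurd h4 hvne

end Spectral


theorem clipped_gauge_entropy_formula {L m : ℕ}
    (gen : Fin m → Bool × (Fin L → Fin 4))
    -- the generators commute (G is abelian)
    (hcomm : ∀ j k, Commute (genMat (gen j)) (genMat (gen k)))
    -- the generators are independent: distinct subsets give distinct group elements
    (hindep : Function.Injective (groupElem gen hcomm))
    -- the group does not contain -I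
    (hneg : ∀ T : Finset (Fin m), groupElem gen hcomm T ≠ -1)
    -- the generating set is in the clipped gauge
    (hclip : ClippedGauge gen)
    -- A is a contiguous region (an interval)
    (lo hi : Fin L) :
    entRegion (stabState gen hcomm) (Finset.Icc lo hi)
      = ((Finset.Icc lo hi).card : ℝ)
        - (Finset.univ.filter fun j =>
            (Finset.univ.filter fun i => (gen j).2 i ≠ 0) ⊆ Finset.Icc lo hi).card := by
  classical
  set A : Finset (Fin L) := Finset.Icc lo hi with hA
  set K : Finset (Fin m) := Finset.univ.filter (fun j =>
    (Finset.univ.filter fun i => (gen j).2 i ≠ 0) ⊆ Finset.Icc lo hi) with hK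
  obtain ⟨c, hc, hEq⟩ : ∃ c : Finset (Fin m) → ℂ, (∀ T, c T * c T = 1) ∧
      ∀ T, groupElem gen hcomm T = c T • pstr (fT gen T) := by
    choose c h1 h2 using groupElem_struct gen hcomm
    exact ⟨c, h1, h2⟩
  set P : Finset (Fin m) → Matrix ({i // i ∈ A} → Fin 2) ({i // i ∈ A} → Fin 2) ℂ :=
    fun T => pstr (fun i : {i // i ∈ A} => fT gen T i) with hP
  set M := ∑ T ∈ K.powerset, c T • P T with hM
  set nc := Fintype.card {i : Fin L // i ∉ A} with hnc
  -- supports of T ⊆ K are inside A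
  have hfT0 : ∀ T ∈ K.powerset, (∀ i, i ∉ A → fT gen T i = 0) := by
    intro T hT
    rw [hA]
    apply (fT_supported_iff gen hcomm hindep hneg hclip lo hi T).mpr
    intro j hj
    have := Finset.mem_powerset.mp hT hj
    rw [hK, Finset.mem_filter] at this
    exact this.2
  -- the partial trace of each group element
  have hstep : ∀ T : Finset (Fin m), ptrace A (groupElem gen hcomm T)
      = if T ∈ K.powerset then ((2:ℂ)^nc * c T) • P T else 0 := by
    intro T
    rw [hEq T, ptrace_smul, ptrace_pstr A (fT gen T)]
    by_cases hT : T ∈ K.powerset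
    · rw [if_pos hT]
      have hprod : (∏ i : {i : Fin L // i ∉ A}, (if fT gen T i.1 = 0 then (2:ℂ) else 0))
          = 2^nc :=
        (Finset.prod_congr rfl (fun i _ => if_pos (hfT0 T hT i.1 i.2))).trans
          (by simp [hnc])
      rw [hprod, smul_smul, mul_comm]
    · rw [if_neg hT]
      have hnot : ¬ (∀ i, i ∉ A → fT gen T i = 0) := by
        intro hcontra
        apply hT
        rw [Finset.mem_powerset]
        intro j hj
        rw [hK, Finset.mem_filter]
        refine ⟨Finset.mem_univ j, ?_⟩
        exact (fT_supported_iff gen hcomm hindep hneg hclip lo hi T).mp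
          (by rw [hA] at hcontra; exact hcontra) j hj
      push_neg at hnot
      obtain ⟨i0, hi0A, hi0⟩ := hnot
      have hzero : (∏ i : {i : Fin L // i ∉ A}, (if fT gen T i = 0 then (2:ℂ) else 0)) = 0 :=
        Finset.prod_eq_zero (Finset.mem_univ (⟨i0, hi0A⟩ : {i : Fin L // i ∉ A}))
          (by simp [hi0])
      rw [hzero, zero_smul, smul_zero]
  -- the reduced density matrix
  have hrhoA : ptrace A (stabState gen hcomm) = (((2:ℂ)^L)⁻¹ * 2^nc) • M := by
    rw [stabState, ptrace_smul, ptrace_sum,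
      Finset.sum_congr rfl (fun T _ => hstep T), Finset.sum_ite_mem,
      Finset.univ_inter, Finset.smul_sum, hM, Finset.smul_sum]
    refine Finset.sum_congr rfl fun T _ => ?_
    rw [smul_smul, smul_smul, ← mul_assoc]
  -- c is real
  have hcreal : ∀ T, star (c T) = c T := by
    intro T
    rcases mul_self_eq_one_iff.mp (hc T) with h | h <;> rw [h] <;> simp
  -- M is Hermitian
  have hMherm : M.IsHermitian := by
    rw [hM, Matrix.IsHermitian, Matrix.conjTranspose_sum]
    refine Finset.sum_congr rfl fun T _ => ?_
    rw [Matrix.conjTranspose_smul, hcreal, hP, (pstr_herm _).eq]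
  -- scalar is real
  have hstar2 : star ((2:ℂ)) = 2 := by simp
  have hzstar : star (((2:ℂ)^L)⁻¹ * 2^nc) = ((2:ℂ)^L)⁻¹ * 2^nc := by
    rw [star_mul', star_inv₀, star_pow, star_pow, hstar2]
  have hH : (ptrace A (stabState gen hcomm)).IsHermitian := by
    rw [hrhoA, Matrix.IsHermitian, Matrix.conjTranspose_smul, hzstar, hMherm.eq]
  -- product of restricted strings
  have hPmul : ∀ T ∈ K.powerset, ∀ T' ∈ K.powerset,
      (c T • P T) * (c T' • P T') = c (T ∆ T') • P (T ∆ T') := by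
    intro T hT T' hT'
    have hscal : c T * c T' * ∏ i : Fin L, mu (fT gen T i) (fT gen T' i) = c (T ∆ T') := by
      have h1 := groupElem_symmDiff gen hcomm T T'
      rw [hEq T, hEq T', hEq (T ∆ T'), smul_mul_smul_comm, pstr_mul, smul_smul,
        fT_symmDiff] at h1
      exact smul_left_injective ℂ
        (M := Matrix (Fin L → Fin 2) (Fin L → Fin 2) ℂ)
        (pstr_ne_zero _) h1
    have hmu : (∏ i : {i : Fin L // i ∈ A}, mu (fT gen T i) (fT gen T' i))
        = ∏ i : Fin L, mu (fT gen T i) (fT gen T' i) := by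
      rw [← Fintype.prod_subtype_mul_prod_subtype (fun i : Fin L => i ∈ A)
        (fun i => mu (fT gen T i) (fT gen T' i))]
      have hone : (∏ i : {i : Fin L // ¬ i ∈ A}, mu (fT gen T i) (fT gen T' i)) = 1 := by
        apply Finset.prod_eq_one
        intro i _
        rw [hfT0 T hT i i.2, hfT0 T' hT' i i.2, mu_zero_left]
      rw [hone, mul_one]
      exact Finset.prod_congr (by ext; simp) fun i _ => rfl
    have hfun : (fun i : {i : Fin L // i ∈ A} => padd (fT gen T i) (fT gen T' i))
        = fun i : {i : Fin L // i ∈ A} => fT gen (T ∆ T') i := by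
      funext i
      rw [fT_symmDiff]
    rw [smul_mul_smul_comm, hP, pstr_mul, hfun, smul_smul, hmu, hscal]
  -- M squared
  have hssub : ∀ T ∈ K.powerset, ∀ T' ∈ K.powerset, T ∆ T' ∈ K.powerset := by
    intro T hT T' hT'
    rw [Finset.mem_powerset] at *
    intro i hi
    rcases Finset.mem_symmDiff.mp hi with ⟨h1, _⟩ | ⟨h1, _⟩
    · exact hT h1
    · exact hT' h1
  have hMM : M * M = ((2:ℂ)^K.card) • M := by
    rw [hM, Finset.sum_mul_sum]
    have hinner : ∀ T ∈ K.powerset,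
        ∑ T' ∈ K.powerset, (c T • P T) * (c T' • P T') = M := by
      intro T hT
      rw [Finset.sum_congr rfl (fun T' hT' => hPmul T hT T' hT')]
      rw [hM]
      apply Finset.sum_nbij' (fun T' => T ∆ T') (fun S => T ∆ S)
      · intro T' hT'; exact hssub T hT T' hT'
      · intro S hS; exact hssub T hT S hS
      · intro T' _; exact symmDiff_symmDiff_cancel_left T T'
      · intro S _; exact symmDiff_symmDiff_cancel_left T S
      · intro T' _; rfl
    rw [Finset.sum_congr rfl hinner, Finset.sum_const, Finset.card_powerset,
      ← Nat.cast_smul_eq_nsmul ℂ]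
    norm_num
    exact hM
  -- rho_A squared
  set lam : ℝ := 2^K.card * 2^nc / 2^L with hlam
  have hlamC : ((lam : ℝ) : ℂ) = (2:ℂ)^K.card * 2^nc / 2^L := by
    rw [hlam]; push_cast; ring
  have h2L : ((2:ℂ)^L) ≠ 0 := pow_ne_zero _ two_ne_zero
  have hsq : ptrace A (stabState gen hcomm) * ptrace A (stabState gen hcomm)
      = ((lam : ℝ) : ℂ) • ptrace A (stabState gen hcomm) := by
    rw [hrhoA, smul_mul_smul_comm, hMM, smul_smul, smul_smul, hlamC]
    congr 1
    field_simp
  have heig := fun x => eig_dichotomy hH lam hsq x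
  -- trace is one
  have htrace1 : (ptrace A (stabState gen hcomm)).trace = 1 :=
    (trace_ptrace A _).trans (trace_stabState gen hcomm hindep hneg)
  have htr : ∑ x, hH.eigenvalues x = 1 := by
    have h2 := trace_eq_sum_eig hH
    rw [htrace1] at h2
    exact_mod_cast h2.symm
  have hlampos : 0 < lam := by rw [hlam]; positivity
  -- the entropy computation
  rw [entRegion, vnEntropy, dif_pos hH]
  have hsum : ∑ x, Real.negMulLog (hH.eigenvalues x)
      = (∑ x, hH.eigenvalues x) * (-Real.log lam) := by
    rw [Finset.sum_mul]
    refine Finset.sum_congr rfl fun x _ => ?_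
    rcases heig x with h | h
    · rw [h]; simp [Real.negMulLog]
    · rw [h, Real.negMulLog]; ring
  rw [hsum, htr, one_mul]
  -- cardinalities
  have hAcard : Fintype.card {i : Fin L // i ∈ A} = A.card := Fintype.card_coe A
  have hcards : A.card + nc = L := by
    have h1 := Fintype.card_subtype_compl (fun i : Fin L => i ∈ A)
    rw [hAcard, Fintype.card_fin] at h1
    have h2 : A.card ≤ L := by
      have := Finset.card_le_univ A
      simpa using this
    omega
  have hlog2pos : (0:ℝ) < Real.log 2 := Real.log_pos (by norm_num)
  have hlog : Real.log lam
      = (K.card : ℝ) * Real.log 2 + (nc : ℝ) * Real.log 2 - (L : ℝ) * Real.log 2 := by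
    rw [hlam, Real.log_div (by positivity) (by positivity),
      Real.log_mul (by positivity) (by positivity), Real.log_pow, Real.log_pow,
      Real.log_pow]
  rw [hlog]
  have hLr : (L : ℝ) = (A.card : ℝ) + (nc : ℝ) := by exact_mod_cast hcards.symm
  rw [hLr]
  field_simp
  ring

end Stmt0
end

section
/- For a stabilizer channel E from system P to system Q with Choi state Φ_E, a Pauli operator O on P satisfies O = E†(Õ) for a Pauli operator Õ on Q if and only if Oᵀ ⊗ Õ is a stabilizer of Φ_E (i.e., tr(Φ_E · (Oᵀ ⊗ Õ)) = 1). -/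
/-!
STATEMENT 9: For a stabilizer channel E from system P to system Q (its adjoint E† maps
Pauli operators to Pauli operators) with Choi state
Φ_E = (1/dim P) Σ_{i,j} E(|i⟩⟨j|)_Q ⊗ (|i⟩⟨j|)_R  (R a copy of P),
a Pauli operator O on P satisfies O = E†(Õ) for a Pauli operator Õ on Q if and only if
Oᵀ ⊗ Õ is a stabilizer of Φ_E, i.e. tr(Φ_E · (Õ ⊗ Oᵀ)) = 1 (Õ acting on Q, Oᵀ on R).

Systems are collections of qubits: P has qubit set ιP (basis (ιP → Fin 2)) and Q has
qubit set ιQ.  The adjoint E† is encoded by a linear map E' together with the trace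
duality tr(E'(Y)·X) = tr(Y·E(X)).
-/

open scoped BigOperators Kronecker

namespace Stmt9

/-- The four single-qubit Pauli matrices I, X, Y, Z. -/
noncomputable def pauliMat : Fin 4 → Matrix (Fin 2) (Fin 2) ℂ :=
  ![1, !![0, 1; 1, 0], !![0, -Complex.I; Complex.I, 0], !![1, 0; 0, -1]]

/-- The Pauli string with content `f` on the qubit set `ι`. -/
noncomputable def pauliString {ι : Type*} [Fintype ι] (f : ι → Fin 4) :
    Matrix (ι → Fin 2) (ι → Fin 2) ℂ :=
  fun x y => ∏ i, pauliMat (f i) (x i) (y i)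

/-- A matrix is a Pauli operator if it is a Pauli string. -/
def IsPauli {ι : Type*} [Fintype ι] (M : Matrix (ι → Fin 2) (ι → Fin 2) ℂ) : Prop :=
  ∃ f : ι → Fin 4, M = pauliString f

/-- The Choi state of the channel E, on Q ⊗ R with R a copy of P. -/
noncomputable def choiState {ιP ιQ : Type*} [Fintype ιP] [DecidableEq ιP] [Fintype ιQ]
    (E : Matrix (ιP → Fin 2) (ιP → Fin 2) ℂ →ₗ[ℂ] Matrix (ιQ → Fin 2) (ιQ → Fin 2) ℂ) :
    Matrix ((ιQ → Fin 2) × (ιP → Fin 2)) ((ιQ → Fin 2) × (ιP → Fin 2)) ℂ :=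
  ((Fintype.card (ιP → Fin 2) : ℂ))⁻¹ •
    ∑ i : ιP → Fin 2, ∑ j : ιP → Fin 2,
      (E (Matrix.single i j 1)) ⊗ₖ (Matrix.single i j 1)

open Matrix

lemma trace_pauliMat_mul (a b : Fin 4) :
    (pauliMat a * pauliMat b).trace = if a = b then 2 else 0 := by
  fin_cases a <;> fin_cases b <;>
    simp [pauliMat, Matrix.trace_fin_two, Matrix.mul_apply, Fin.sum_univ_two,
      Matrix.one_fin_two, Complex.I_mul_I] <;> norm_num

lemma pauliString_mul_trace {ι : Type*} [Fintype ι] [DecidableEq ι] (f g : ι → Fin 4) :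
    (pauliString f * pauliString g).trace =
      ∏ i, (pauliMat (f i) * pauliMat (g i)).trace := by
  have h : ∀ i, (pauliMat (f i) * pauliMat (g i)).trace
      = ∑ p : Fin 2 × Fin 2, pauliMat (f i) p.1 p.2 * pauliMat (g i) p.2 p.1 := by
    intro i
    rw [Fintype.sum_prod_type]
    simp [Matrix.trace, Matrix.diag, Matrix.mul_apply]
  simp_rw [h]
  rw [Fintype.prod_sum]
  rw [Matrix.trace]
  simp only [Matrix.diag, Matrix.mul_apply, pauliString]
  rw [← (Equiv.arrowProdEquivProdArrow ι (fun _ => Fin 2) (fun _ => Fin 2)).symm.sum_comp]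
  · rw [Fintype.sum_prod_type]
    refine Finset.sum_congr rfl fun z _ => Finset.sum_congr rfl fun x _ => ?_
    rw [← Finset.prod_mul_distrib]
    simp [Equiv.arrowProdEquivProdArrow]

lemma trace_pauliString_mul {ι : Type*} [Fintype ι] [DecidableEq ι] (f g : ι → Fin 4) :
    (pauliString f * pauliString g).trace =
      if f = g then (Fintype.card (ι → Fin 2) : ℂ) else 0 := by
  rw [pauliString_mul_trace]
  simp_rw [trace_pauliMat_mul]
  by_cases h : f = g
  · subst h
    simp [Fintype.card_fun]
  · rw [if_neg h]
    obtain ⟨i, hi⟩ := Function.ne_iff.mp h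
    exact Finset.prod_eq_zero (Finset.mem_univ i) (by simp [hi])

lemma trace_stdBasisMatrix_mul {n : Type*} [Fintype n] [DecidableEq n]
    (i j : n) (M : Matrix n n ℂ) :
    (Matrix.single i j (1:ℂ) * M).trace = M j i := by
  simp [Matrix.trace, Matrix.diag, Matrix.mul_apply, Matrix.single, ite_and]

theorem recoverable_iff_stabilizes_choi
    {ιP ιQ : Type*} [Fintype ιP] [DecidableEq ιP] [Fintype ιQ] [DecidableEq ιQ]
    (E : Matrix (ιP → Fin 2) (ιP → Fin 2) ℂ →ₗ[ℂ] Matrix (ιQ → Fin 2) (ιQ → Fin 2) ℂ)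
    (E' : Matrix (ιQ → Fin 2) (ιQ → Fin 2) ℂ →ₗ[ℂ] Matrix (ιP → Fin 2) (ιP → Fin 2) ℂ)
    -- E' is the adjoint E† of E with respect to the trace pairing
    (h_adj : ∀ X Y, (E' Y * X).trace = (Y * E X).trace)
    -- E is trace preserving (a channel)
    (h_tp : ∀ X, (E X).trace = X.trace)
    -- the adjoint maps Pauli operators to Pauli operators (stabilizer channel)
    (h_pauli : ∀ Y, IsPauli Y → IsPauli (E' Y))
    (O : Matrix (ιP → Fin 2) (ιP → Fin 2) ℂ) (hO : IsPauli O)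
    (Ot : Matrix (ιQ → Fin 2) (ιQ → Fin 2) ℂ) (hOt : IsPauli Ot) :
    O = E' Ot ↔ (choiState E * (Ot ⊗ₖ Oᵀ)).trace = 1 := by
  obtain ⟨f, hf⟩ := hO
  obtain ⟨g, hg⟩ := h_pauli Ot hOt
  have hd : ((Fintype.card (ιP → Fin 2) : ℂ)) ≠ 0 :=
    Nat.cast_ne_zero.mpr Fintype.card_pos.ne'
  have key : (choiState E * (Ot ⊗ₖ Oᵀ)).trace
      = ((Fintype.card (ιP → Fin 2) : ℂ))⁻¹ * (E' Ot * O).trace := by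
    rw [choiState, Matrix.smul_mul, Matrix.trace_smul, smul_eq_mul]
    congr 1
    rw [Finset.sum_mul, Matrix.trace_sum]
    have step : ∀ i j : ιP → Fin 2,
        ((E (Matrix.single i j 1) ⊗ₖ Matrix.single i j 1) * (Ot ⊗ₖ Oᵀ)).trace
          = (E' Ot) j i * O i j := by
      intro i j
      rw [← Matrix.mul_kronecker_mul, Matrix.trace_kronecker, trace_stdBasisMatrix_mul,
        Matrix.trace_mul_comm, ← h_adj]
      rw [Matrix.trace_mul_comm, trace_stdBasisMatrix_mul, Matrix.transpose_apply]
    calc ∑ i, ((∑ j, E (Matrix.single i j 1) ⊗ₖ Matrix.single i j 1) *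
          (Ot ⊗ₖ Oᵀ)).trace
        = ∑ i, ∑ j, (E' Ot) j i * O i j := by
          refine Finset.sum_congr rfl fun i _ => ?_
          rw [Finset.sum_mul, Matrix.trace_sum]
          exact Finset.sum_congr rfl fun j _ => step i j
      _ = (E' Ot * O).trace := by
          rw [Finset.sum_comm]
          simp [Matrix.trace, Matrix.diag, Matrix.mul_apply]
  rw [key]
  constructor
  · intro h
    rw [← h, hf, trace_pauliString_mul, if_pos rfl, inv_mul_cancel₀ hd]
  · intro h
    rw [hg, hf, trace_pauliString_mul] at h
    by_cases hfg : g = f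
    · rw [hf, hg, hfg]
    · rw [if_neg hfg, mul_zero] at h
      exact absurd h.symm one_ne_zero

end Stmt9
end
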